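/- arXiv:2404.18337 — 2 statements merged into one kernel-verified Lean document; each statement's English description precedes it below -/
import Mathlib

section
/- Let r be a positive integer, W = {(x, y, x²+y²) : x, y ∈ [r/2, r] ∩ ℤ}, W₁ = {(x, 0, x²) : x ∈ [r/2, r] ∩ ℤ}, W₂ = {(0, y, y²) : y ∈ [r/2, r] ∩ ℤ}, and W' = W ∪ (-W) ∪ (W₁ - W₂) ∪ (W₂ - W₁). Then for every w = (x, y, x²+y²) ∈ W, setting c = (2x, 2y, -1), the vector w is the unique maximizer in W' of the inner product ⟨c, ·⟩; in particular w is an extreme point of the convex hull of W'. -/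
open Pointwise

noncomputable def dot3 (u v : ℝ × ℝ × ℝ) : ℝ :=
  u.1 * v.1 + u.2.1 * v.2.1 + u.2.2 * v.2.2

def setW1 (r : ℕ) : Set (ℝ × ℝ × ℝ) :=
  {w | ∃ x : ℤ, (r : ℤ) ≤ 2 * x ∧ x ≤ r ∧ w = ((x : ℝ), 0, (x : ℝ) ^ 2)}

def setW2 (r : ℕ) : Set (ℝ × ℝ × ℝ) :=
  {w | ∃ y : ℤ, (r : ℤ) ≤ 2 * y ∧ y ≤ r ∧ w = (0, (y : ℝ), (y : ℝ) ^ 2)}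

def setW (r : ℕ) : Set (ℝ × ℝ × ℝ) :=
  {w | ∃ x y : ℤ, (r : ℤ) ≤ 2 * x ∧ x ≤ r ∧ (r : ℤ) ≤ 2 * y ∧ y ≤ r ∧
    w = ((x : ℝ), (y : ℝ), (x : ℝ) ^ 2 + (y : ℝ) ^ 2)}

def setW' (r : ℕ) : Set (ℝ × ℝ × ℝ) :=
  setW r ∪ (-setW r) ∪ (setW1 r - setW2 r) ∪ (setW2 r - setW1 r)

lemma dot3_linear (c : ℝ × ℝ × ℝ) : IsLinearMap ℝ (dot3 c) := by
  constructor <;> intros <;>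
    simp [dot3, Prod.fst_add, Prod.snd_add, Prod.smul_fst, Prod.smul_snd, smul_eq_mul] <;> ring

set_option maxHeartbeats 1000000 in
lemma key_bound (r : ℕ) (hr : 0 < r) (x y : ℤ)
    (hx1 : (r : ℤ) ≤ 2 * x) (hx2 : x ≤ r) (hy1 : (r : ℤ) ≤ 2 * y) (hy2 : y ≤ r) :
    ∀ u ∈ setW' r, dot3 (2 * (x : ℝ), 2 * (y : ℝ), -1) u ≤ (x : ℝ) ^ 2 + (y : ℝ) ^ 2 ∧
      (u ≠ ((x : ℝ), (y : ℝ), (x : ℝ) ^ 2 + (y : ℝ) ^ 2) →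
        dot3 (2 * (x : ℝ), 2 * (y : ℝ), -1) u ≤ (x : ℝ) ^ 2 + (y : ℝ) ^ 2 - 4⁻¹) := by
  intro u hu
  have hr' : (1 : ℝ) ≤ (r : ℝ) := by exact_mod_cast hr
  have hX1 : (r : ℝ) ≤ 2 * (x : ℝ) := by exact_mod_cast hx1
  have hX2 : (x : ℝ) ≤ (r : ℝ) := by exact_mod_cast hx2
  have hY1 : (r : ℝ) ≤ 2 * (y : ℝ) := by exact_mod_cast hy1
  have hY2 : (y : ℝ) ≤ (r : ℝ) := by exact_mod_cast hy2
  have hrr : (1 : ℝ) ≤ (r : ℝ) * (r : ℝ) := by nlinarith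
  rcases hu with ((hu | hu) | hu) | hu
  · obtain ⟨a, b, ha1, ha2, hb1, hb2, rfl⟩ := hu
    constructor
    · simp only [dot3]
      nlinarith [sq_nonneg ((x : ℝ) - a), sq_nonneg ((y : ℝ) - b)]
    · intro hne
      have hab : a ≠ x ∨ b ≠ y := by
        by_contra h
        push_neg at h
        exact hne (by rw [h.1, h.2])
      have hge : (1 : ℝ) ≤ ((x : ℝ) - a) ^ 2 + ((y : ℝ) - b) ^ 2 := by
        have h : (1 : ℤ) ≤ (x - a) ^ 2 + (y - b) ^ 2 := by
          rcases hab with h | h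
          · have h1 : (1 : ℤ) ≤ |x - a| := Int.one_le_abs (sub_ne_zero.mpr (Ne.symm h))
            nlinarith [sq_nonneg (y - b), sq_abs (x - a), abs_nonneg (x - a)]
          · have h1 : (1 : ℤ) ≤ |y - b| := Int.one_le_abs (sub_ne_zero.mpr (Ne.symm h))
            nlinarith [sq_nonneg (x - a), sq_abs (y - b), abs_nonneg (y - b)]
        exact_mod_cast h
      simp only [dot3]
      nlinarith
  · rw [Set.mem_neg] at hu
    obtain ⟨a, b, ha1, ha2, hb1, hb2, h⟩ := hu
    have hA1 : (r : ℝ) ≤ 2 * (a : ℝ) := by exact_mod_cast ha1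
    have hA2 : (a : ℝ) ≤ (r : ℝ) := by exact_mod_cast ha2
    have hB1 : (r : ℝ) ≤ 2 * (b : ℝ) := by exact_mod_cast hb1
    have hB2 : (b : ℝ) ≤ (r : ℝ) := by exact_mod_cast hb2
    have hu' : u = (-(a : ℝ), -(b : ℝ), -((a : ℝ) ^ 2 + (b : ℝ) ^ 2)) := by
      have := congrArg Neg.neg h
      simpa [Prod.ext_iff] using this
    subst hu'
    have hstrong : dot3 (2 * (x : ℝ), 2 * (y : ℝ), -1)
        (-(a : ℝ), -(b : ℝ), -((a : ℝ) ^ 2 + (b : ℝ) ^ 2)) ≤ (x : ℝ) ^ 2 + (y : ℝ) ^ 2 - 4⁻¹ := by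
      simp only [dot3]
      nlinarith [mul_nonneg (by linarith : (0:ℝ) ≤ (r:ℝ) - 2*a + 2*x) (by linarith : (0:ℝ) ≤ (r:ℝ) + 2*a - 2*x),
        mul_nonneg (by linarith : (0:ℝ) ≤ 2*(x:ℝ) - r) (by linarith : (0:ℝ) ≤ 2*(x:ℝ) + r),
        mul_nonneg (by linarith : (0:ℝ) ≤ (r:ℝ) - 2*b + 2*y) (by linarith : (0:ℝ) ≤ (r:ℝ) + 2*b - 2*y),
        mul_nonneg (by linarith : (0:ℝ) ≤ 2*(y:ℝ) - r) (by linarith : (0:ℝ) ≤ 2*(y:ℝ) + r)]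
    exact ⟨by linarith, fun _ => hstrong⟩
  · rw [Set.mem_sub] at hu
    obtain ⟨v, ⟨a, ha1, ha2, rfl⟩, z, ⟨b, hb1, hb2, rfl⟩, rfl⟩ := hu
    have hB1 : (r : ℝ) ≤ 2 * (b : ℝ) := by exact_mod_cast hb1
    have hB2 : (b : ℝ) ≤ (r : ℝ) := by exact_mod_cast hb2
    have hA1 : (r : ℝ) ≤ 2 * (a : ℝ) := by exact_mod_cast ha1
    have hA2 : (a : ℝ) ≤ (r : ℝ) := by exact_mod_cast ha2
    have hstrong : dot3 (2 * (x : ℝ), 2 * (y : ℝ), -1)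
        (((a : ℝ), 0, (a : ℝ) ^ 2) - (0, (b : ℝ), (b : ℝ) ^ 2)) ≤ (x : ℝ) ^ 2 + (y : ℝ) ^ 2 - 4⁻¹ := by
      simp only [dot3, Prod.fst_sub, Prod.snd_sub]
      nlinarith [sq_nonneg ((x : ℝ) - a),
        mul_nonneg (by linarith : (0:ℝ) ≤ (r:ℝ) - 2*b + 2*y) (by linarith : (0:ℝ) ≤ (r:ℝ) + 2*b - 2*y),
        mul_nonneg (by linarith : (0:ℝ) ≤ 2*(y:ℝ) - r) (by linarith : (0:ℝ) ≤ 2*(y:ℝ) + r)]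
    exact ⟨by linarith, fun _ => hstrong⟩
  · rw [Set.mem_sub] at hu
    obtain ⟨v, ⟨b, hb1, hb2, rfl⟩, z, ⟨a, ha1, ha2, rfl⟩, rfl⟩ := hu
    have hB1 : (r : ℝ) ≤ 2 * (b : ℝ) := by exact_mod_cast hb1
    have hB2 : (b : ℝ) ≤ (r : ℝ) := by exact_mod_cast hb2
    have hA1 : (r : ℝ) ≤ 2 * (a : ℝ) := by exact_mod_cast ha1
    have hA2 : (a : ℝ) ≤ (r : ℝ) := by exact_mod_cast ha2
    have hstrong : dot3 (2 * (x : ℝ), 2 * (y : ℝ), -1)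
        ((0, (b : ℝ), (b : ℝ) ^ 2) - ((a : ℝ), 0, (a : ℝ) ^ 2)) ≤ (x : ℝ) ^ 2 + (y : ℝ) ^ 2 - 4⁻¹ := by
      simp only [dot3, Prod.fst_sub, Prod.snd_sub]
      nlinarith [sq_nonneg ((y : ℝ) - b),
        mul_nonneg (by linarith : (0:ℝ) ≤ (r:ℝ) - 2*a + 2*x) (by linarith : (0:ℝ) ≤ (r:ℝ) + 2*a - 2*x),
        mul_nonneg (by linarith : (0:ℝ) ≤ 2*(x:ℝ) - r) (by linarith : (0:ℝ) ≤ 2*(x:ℝ) + r)]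
    exact ⟨by linarith, fun _ => hstrong⟩

/-- Each `w = (x, y, x²+y²) ∈ W` is the unique maximizer of `⟨c, ·⟩` over `W'` with
`c = (2x, 2y, -1)`; in particular `w` is an extreme point of `Conv(W')`. -/
theorem stmt0 (r : ℕ) (hr : 0 < r) (x y : ℤ)
    (hx1 : (r : ℤ) ≤ 2 * x) (hx2 : x ≤ r) (hy1 : (r : ℤ) ≤ 2 * y) (hy2 : y ≤ r) :
    (∀ u ∈ setW' r,
        dot3 (2 * (x : ℝ), 2 * (y : ℝ), -1) u ≤
          dot3 (2 * (x : ℝ), 2 * (y : ℝ), -1)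
            ((x : ℝ), (y : ℝ), (x : ℝ) ^ 2 + (y : ℝ) ^ 2) ∧
        (dot3 (2 * (x : ℝ), 2 * (y : ℝ), -1) u =
            dot3 (2 * (x : ℝ), 2 * (y : ℝ), -1)
              ((x : ℝ), (y : ℝ), (x : ℝ) ^ 2 + (y : ℝ) ^ 2) →
          u = ((x : ℝ), (y : ℝ), (x : ℝ) ^ 2 + (y : ℝ) ^ 2))) ∧
      ((x : ℝ), (y : ℝ), (x : ℝ) ^ 2 + (y : ℝ) ^ 2) ∈
        Set.extremePoints ℝ (convexHull ℝ (setW' r)) := by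
  set c : ℝ × ℝ × ℝ := (2 * (x : ℝ), 2 * (y : ℝ), -1) with hc
  set w : ℝ × ℝ × ℝ := ((x : ℝ), (y : ℝ), (x : ℝ) ^ 2 + (y : ℝ) ^ 2) with hw
  set M : ℝ := (x : ℝ) ^ 2 + (y : ℝ) ^ 2 with hM
  have key := key_bound r hr x y hx1 hx2 hy1 hy2
  have hfw : dot3 c w = M := by simp only [dot3, hc, hw, hM]; ring
  have hlin := dot3_linear c
  have hwW' : w ∈ setW' r := by
    left; left; left
    exact ⟨x, y, hx1, hx2, hy1, hy2, rfl⟩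
  have hCH : ∀ z ∈ convexHull ℝ (setW' r), dot3 c z ≤ M :=
    fun z hz => convexHull_min (fun u hu => (key u hu).1) (convex_halfSpace_le hlin M) hz
  have huniq : ∀ z ∈ convexHull ℝ (setW' r), dot3 c z = M → z = w := by
    intro z hz hf
    set B : Set (ℝ × ℝ × ℝ) := {u | dot3 c u ≤ M - 4⁻¹} with hB
    have hBconv : Convex ℝ B := convex_halfSpace_le hlin _
    have hBne : B.Nonempty := by
      refine ⟨(0, 0, M + 1), ?_⟩
      simp only [hB, Set.mem_setOf_eq, dot3, hc]
      nlinarith [sq_nonneg (x : ℝ), sq_nonneg (y : ℝ)]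
    have hsub : setW' r ⊆ insert w B := by
      intro u hu
      rcases eq_or_ne u w with h | h
      · exact Or.inl h
      · exact Or.inr ((key u hu).2 h)
    have h2 : z ∈ convexHull ℝ (insert w B) := convexHull_mono hsub hz
    rw [convexHull_insert hBne, hBconv.convexHull_eq] at h2
    obtain ⟨w', hw', v, hv, hseg⟩ := mem_convexJoin.mp h2
    rw [Set.mem_singleton_iff] at hw'
    subst hw'
    obtain ⟨a, b, ha, hb, hab, hsum⟩ := hseg
    have hfv : dot3 c v ≤ M - 4⁻¹ := hv
    have hcomb : dot3 c (a • w + b • v) = a * dot3 c w + b * dot3 c v := by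
      rw [hlin.map_add, hlin.map_smul, hlin.map_smul]; simp [smul_eq_mul]
    rw [← hsum] at hf
    rw [hcomb, hfw] at hf
    have hb0 : b = 0 := by nlinarith
    have ha1 : a = 1 := by linarith
    rw [← hsum, hb0, ha1]
    simp
  refine ⟨fun u hu => ⟨by rw [hfw]; exact (key u hu).1, fun heq => ?_⟩, ?_⟩
  · by_contra hne
    have := (key u hu).2 hne
    rw [hfw] at heq
    linarith
  · rw [mem_extremePoints]
    refine ⟨subset_convexHull ℝ _ hwW', fun x1 h1 x2 h2 hseg => ?_⟩
    obtain ⟨a, b, ha, hb, hab, hsum⟩ := hseg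
    have hf1 : dot3 c x1 ≤ M := hCH x1 h1
    have hf2 : dot3 c x2 ≤ M := hCH x2 h2
    have hcomb : dot3 c (a • x1 + b • x2) = a * dot3 c x1 + b * dot3 c x2 := by
      rw [hlin.map_add, hlin.map_smul, hlin.map_smul]; simp [smul_eq_mul]
    have hM' : a * dot3 c x1 + b * dot3 c x2 = M := by rw [← hcomb, hsum, hfw]
    have e1 : dot3 c x1 = M := by nlinarith
    have e2 : dot3 c x2 = M := by nlinarith
    exact ⟨huniq x1 h1 e1, huniq x2 h2 e2⟩
end

section
/- Suppose w = (x, y, x²+y²) with x, y ∈ [r/2, r] ∩ ℤ, and suppose k·w = v₁ + ... + v_k where each vᵢ lies in W' = W ∪ (-W) ∪ (W₁-W₂) ∪ (W₂-W₁) (with W, W₁, W₂ as in the Coppersmith–Elkin-style construction over integers in [r/2, r]). Then vᵢ = w for every i. -/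
open Pointwise

set_option maxHeartbeats 1000000 in
/-- If `k·w = v₁ + ⋯ + v_k` with each `vᵢ ∈ W'` and `w = (x, y, x²+y²) ∈ W`,
then `vᵢ = w` for every `i`. -/
theorem stmt3 (r : ℕ) (hr : 0 < r) (x y : ℤ)
    (hx1 : (r : ℤ) ≤ 2 * x) (hx2 : x ≤ r) (hy1 : (r : ℤ) ≤ 2 * y) (hy2 : y ≤ r)
    (k : ℕ) (v : Fin k → ℝ × ℝ × ℝ) (hv : ∀ i, v i ∈ setW' r)
    (hsum : (k : ℝ) • (((x : ℝ), (y : ℝ), (x : ℝ) ^ 2 + (y : ℝ) ^ 2) : ℝ × ℝ × ℝ) =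
      ∑ i, v i) :
    ∀ i, v i = ((x : ℝ), (y : ℝ), (x : ℝ) ^ 2 + (y : ℝ) ^ 2) := by
  have hrR : (1 : ℝ) ≤ r := by exact_mod_cast hr
  have hx1R : (r : ℝ) ≤ 2 * x := by exact_mod_cast hx1
  have hx2R : (x : ℝ) ≤ r := by exact_mod_cast hx2
  have hy1R : (r : ℝ) ≤ 2 * y := by exact_mod_cast hy1
  have hy2R : (y : ℝ) ≤ r := by exact_mod_cast hy2
  have key : ∀ i, -((x : ℝ) ^ 2 + (y : ℝ) ^ 2) ≤
        (v i).2.2 - 2 * x * (v i).1 - 2 * y * (v i).2.1 ∧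
      ((v i).2.2 - 2 * x * (v i).1 - 2 * y * (v i).2.1 = -((x : ℝ) ^ 2 + (y : ℝ) ^ 2) →
        v i = ((x : ℝ), (y : ℝ), (x : ℝ) ^ 2 + (y : ℝ) ^ 2)) := by
    intro i
    rcases hv i with ((hW | hN) | h12) | h21
    · obtain ⟨a, b, ha1, ha2, hb1, hb2, heq⟩ := hW
      have ha1R : (r : ℝ) ≤ 2 * a := by exact_mod_cast ha1
      have ha2R : (a : ℝ) ≤ r := by exact_mod_cast ha2
      have hb1R : (r : ℝ) ≤ 2 * b := by exact_mod_cast hb1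
      have hb2R : (b : ℝ) ≤ r := by exact_mod_cast hb2
      rw [heq]
      dsimp only
      constructor
      · nlinarith [sq_nonneg ((a : ℝ) - x), sq_nonneg ((b : ℝ) - y)]
      · intro heq2
        have hax : (a : ℝ) = x := by
          nlinarith [sq_nonneg ((a : ℝ) - x), sq_nonneg ((b : ℝ) - y)]
        have hby : (b : ℝ) = y := by
          nlinarith [sq_nonneg ((a : ℝ) - x), sq_nonneg ((b : ℝ) - y)]
        rw [hax, hby]
    · rw [Set.mem_neg] at hN
      obtain ⟨a, b, ha1, ha2, hb1, hb2, heq⟩ := hN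
      have hvi : v i = -(((a : ℝ), (b : ℝ), (a : ℝ) ^ 2 + (b : ℝ) ^ 2) : ℝ × ℝ × ℝ) := by
        rw [← heq, neg_neg]
      have ha1R : (r : ℝ) ≤ 2 * a := by exact_mod_cast ha1
      have ha2R : (a : ℝ) ≤ r := by exact_mod_cast ha2
      have hb1R : (r : ℝ) ≤ 2 * b := by exact_mod_cast hb1
      have hb2R : (b : ℝ) ≤ r := by exact_mod_cast hb2
      rw [hvi]
      clear hvi heq hv hsum
      simp only [Prod.fst_neg, Prod.snd_neg]
      constructor
      · nlinarith [mul_nonneg (by linarith : (0:ℝ) ≤ (a:ℝ)) (by linarith : (0:ℝ) ≤ 2*x - a),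
          mul_nonneg (by linarith : (0:ℝ) ≤ (b:ℝ)) (by linarith : (0:ℝ) ≤ 2*y - b)]
      · intro heq2
        exfalso
        nlinarith [mul_nonneg (by linarith : (0:ℝ) ≤ (a:ℝ)) (by linarith : (0:ℝ) ≤ 2*x - a),
          mul_nonneg (by linarith : (0:ℝ) ≤ (b:ℝ)) (by linarith : (0:ℝ) ≤ 2*y - b)]
    · rw [Set.mem_sub] at h12
      obtain ⟨p, hp, q, hq, heq⟩ := h12
      obtain ⟨a, ha1, ha2, hpe⟩ := hp
      obtain ⟨b, hb1, hb2, hqe⟩ := hq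
      have hvi : v i = (((a : ℝ) - 0, 0 - (b : ℝ), (a : ℝ) ^ 2 - (b : ℝ) ^ 2) : ℝ × ℝ × ℝ) := by
        rw [← heq, hpe, hqe, Prod.mk_sub_mk, Prod.mk_sub_mk]
      have ha1R : (r : ℝ) ≤ 2 * a := by exact_mod_cast ha1
      have ha2R : (a : ℝ) ≤ r := by exact_mod_cast ha2
      have hb1R : (r : ℝ) ≤ 2 * b := by exact_mod_cast hb1
      have hb2R : (b : ℝ) ≤ r := by exact_mod_cast hb2
      rw [hvi]
      clear hvi heq hpe hqe hv hsum
      dsimp only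
      constructor
      · nlinarith [sq_nonneg ((a : ℝ) - x), sq_nonneg ((y : ℝ)),
          mul_nonneg (by linarith : (0:ℝ) ≤ (b:ℝ)) (by linarith : (0:ℝ) ≤ 2*y - b)]
      · intro heq2
        exfalso
        nlinarith [sq_nonneg ((a : ℝ) - x),
          mul_pos (by linarith : (0:ℝ) < (y:ℝ)) (by linarith : (0:ℝ) < (y:ℝ)),
          mul_nonneg (by linarith : (0:ℝ) ≤ (b:ℝ)) (by linarith : (0:ℝ) ≤ 2*y - b)]
    · rw [Set.mem_sub] at h21
      obtain ⟨p, hp, q, hq, heq⟩ := h21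
      obtain ⟨b, hb1, hb2, hpe⟩ := hp
      obtain ⟨a, ha1, ha2, hqe⟩ := hq
      have hvi : v i = ((0 - (a : ℝ), (b : ℝ) - 0, (b : ℝ) ^ 2 - (a : ℝ) ^ 2) : ℝ × ℝ × ℝ) := by
        rw [← heq, hpe, hqe, Prod.mk_sub_mk, Prod.mk_sub_mk]
      have ha1R : (r : ℝ) ≤ 2 * a := by exact_mod_cast ha1
      have ha2R : (a : ℝ) ≤ r := by exact_mod_cast ha2
      have hb1R : (r : ℝ) ≤ 2 * b := by exact_mod_cast hb1
      have hb2R : (b : ℝ) ≤ r := by exact_mod_cast hb2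
      rw [hvi]
      clear hvi heq hpe hqe hv hsum
      dsimp only
      constructor
      · nlinarith [sq_nonneg ((b : ℝ) - y), sq_nonneg ((x : ℝ)),
          mul_nonneg (by linarith : (0:ℝ) ≤ (a:ℝ)) (by linarith : (0:ℝ) ≤ 2*x - a)]
      · intro heq2
        exfalso
        nlinarith [sq_nonneg ((b : ℝ) - y),
          mul_pos (by linarith : (0:ℝ) < (x:ℝ)) (by linarith : (0:ℝ) < (x:ℝ)),
          mul_nonneg (by linarith : (0:ℝ) ≤ (a:ℝ)) (by linarith : (0:ℝ) ≤ 2*x - a)]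
  have hA : (k : ℝ) * x = ∑ i, (v i).1 := by
    have := congrArg Prod.fst hsum
    simpa [Prod.fst_sum] using this
  have hB : (k : ℝ) * y = ∑ i, (v i).2.1 := by
    have := congrArg (fun u : ℝ × ℝ × ℝ => u.2.1) hsum
    simpa [Prod.fst_sum, Prod.snd_sum] using this
  have hC : (k : ℝ) * ((x : ℝ) ^ 2 + (y : ℝ) ^ 2) = ∑ i, (v i).2.2 := by
    have := congrArg (fun u : ℝ × ℝ × ℝ => u.2.2) hsum
    simpa [Prod.snd_sum] using this
  have hL : ∑ i, ((v i).2.2 - 2 * x * (v i).1 - 2 * y * (v i).2.1)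
      = (k : ℝ) * (-((x : ℝ) ^ 2 + (y : ℝ) ^ 2)) := by
    rw [Finset.sum_sub_distrib, Finset.sum_sub_distrib, ← Finset.mul_sum, ← Finset.mul_sum,
      ← hA, ← hB, ← hC]
    ring
  by_contra h
  push_neg at h
  obtain ⟨j, hj⟩ := h
  have hjs : -((x : ℝ) ^ 2 + (y : ℝ) ^ 2) <
      (v j).2.2 - 2 * x * (v j).1 - 2 * y * (v j).2.1 :=
    lt_of_le_of_ne (key j).1 fun he => hj ((key j).2 he.symm)
  have hlt : ∑ _i : Fin k, -((x : ℝ) ^ 2 + (y : ℝ) ^ 2) <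
      ∑ i, ((v i).2.2 - 2 * x * (v i).1 - 2 * y * (v i).2.1) :=
    Finset.sum_lt_sum (fun i _ => (key i).1) ⟨j, Finset.mem_univ j, hjs⟩
  rw [Finset.sum_const, Finset.card_univ, Fintype.card_fin, nsmul_eq_mul, hL] at hlt
  exact lt_irrefl _ hlt
end
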